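/- Let A be a free ℤ[τ,τ^{-1}]-module with basis {b_x} indexed by a partially ordered set X such that the intervals {y : y ≤ x} are finite, and let d : A → A be a ℤ-linear involution satisfying d(τ a) = τ^{-1} d(a) and d(b_x) = b_x + Σ_{y < x} r_{y,x} b_y for some r_{y,x} ∈ ℤ[τ,τ^{-1}]. Then for each x ∈ X there exists a unique element u_x ∈ A fixed by d of the form u_x = b_x + Σ_{y < x} h_{y,x} b_y with all h_{y,x} ∈ τℤ[τ]. -/

import Mathlib

open LaurentPolynomial Polynomial Finsupp

namespace StmtSix

local notation "R" => LaurentPolynomial ℤ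

lemma coeff_add (p q : R) (n : ℤ) : (p + q).coeff n = p.coeff n + q.coeff n := rfl
lemma coeff_sub (p q : R) (n : ℤ) : (p - q).coeff n = p.coeff n - q.coeff n := rfl
lemma coeff_neg (p : R) (n : ℤ) : (-p).coeff n = -(p.coeff n) := rfl
lemma coeff_zero' (n : ℤ) : (0 : R).coeff n = 0 := rfl

/-- membership in τℤ[τ] -/
def Mset (p : R) : Prop := ∀ n : ℤ, n ≤ 0 → p.coeff n = 0

lemma Mset_zero : Mset 0 := fun n _ => rfl
lemma Mset_add {p q : R} (hp : Mset p) (hq : Mset q) : Mset (p + q) := fun n hn => by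
  rw [coeff_add, hp n hn, hq n hn, add_zero]
lemma Mset_sub {p q : R} (hp : Mset p) (hq : Mset q) : Mset (p - q) := fun n hn => by
  rw [coeff_sub, hp n hn, hq n hn, sub_zero]

lemma Mset_ofRep (q : Polynomial ℤ) : Mset (T 1 * q.toLaurent) := by
  intro n hn
  have h : (T 1 * q.toLaurent : R).coeff n = 1 * (q.toLaurent).coeff (-1 + n) :=
    AddMonoidAlgebra.coeff_single_mul_apply q.toLaurent 1 1 n
  rw [h, LaurentPolynomial.coeff_toLaurent, Finsupp.mapDomain_of_notMem_range, mul_zero]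
  rintro ⟨k, hk⟩
  have hk : ((k : ℕ) : ℤ) = -1 + n := hk
  omega


lemma coeff_toLaurent_nat (q : Polynomial ℤ) (k : ℕ) : q.toLaurent.coeff (k : ℤ) = q.coeff k := by
  have h : Function.Injective (Nat.cast : ℕ → ℤ) := fun a b hab => by omega
  rw [LaurentPolynomial.coeff_toLaurent]
  exact Finsupp.mapDomain_apply Nat.castEmbedding.injective q.toFinsupp.coeff k

lemma rep_ofMem {p : R} (hp : Mset p) : ∃ q : Polynomial ℤ, p = T 1 * q.toLaurent := by
  obtain ⟨n, f', hf⟩ := exists_T_pow p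
  have hcoe : ∀ k : ℕ, k < n + 1 → f'.coeff k = 0 := by
    intro k hk
    have h1 : f'.toLaurent.coeff (k : ℤ) = f'.coeff k := coeff_toLaurent_nat f' k
    have h2 : f'.toLaurent.coeff (k : ℤ) = p.coeff ((k : ℤ) - n) * 1 := by
      rw [hf]; exact AddMonoidAlgebra.coeff_mul_single_apply p 1 n k
    rw [h1, hp ((k : ℤ) - n) (by omega), zero_mul] at h2
    exact h2
  obtain ⟨q, hq⟩ := (Polynomial.X_pow_dvd_iff (n := n + 1)).2 hcoe
  refine ⟨q, ?_⟩
  have hp2 : p = f'.toLaurent * T (-(n : ℤ)) := by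
    rw [hf, mul_T_assoc]
    simp
  rw [hp2, hq, map_mul, Polynomial.toLaurent_X_pow]
  have hc : ((n + 1 : ℕ) : ℤ) = (n : ℤ) + 1 := by push_cast; ring
  rw [hc, mul_comm ((T ((n:ℤ) + 1) : R)) q.toLaurent, mul_assoc, ← T_add, mul_comm q.toLaurent]
  norm_num

lemma Mset_mul {p q : R} (hp : Mset p) (hq : Mset q) : Mset (p * q) := by
  obtain ⟨a, rfl⟩ := rep_ofMem hp
  obtain ⟨b, rfl⟩ := rep_ofMem hq
  have : (T 1 * a.toLaurent) * (T 1 * b.toLaurent) = T 1 * (X * a * b).toLaurent := by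
    simp only [map_mul, Polynomial.toLaurent_X]
    ring
  rw [this]
  exact Mset_ofRep _

noncomputable def posPart (s : R) : R := AddMonoidAlgebra.ofCoeff (Finsupp.filter (fun n => 0 < n) s.coeff)

lemma posPart_apply (s : R) (n : ℤ) : (posPart s).coeff n = if 0 < n then s.coeff n else 0 :=
  Finsupp.filter_apply _ _ _

lemma Mset_posPart (s : R) : Mset (posPart s) := by
  intro n hn
  rw [posPart_apply, if_neg (by omega)]

lemma posPart_sub {s : R} (h : invert s = -s) : posPart s - invert (posPart s) = s := by
  have hneg : ∀ m : ℤ, s.coeff (-m) = - s.coeff m := by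
    intro m
    have := congrArg (fun z : R => z.coeff m) h
    simpa [invert_apply, coeff_neg] using this
  have h0 : s.coeff 0 = 0 := by
    have := hneg 0
    simp at this
    omega
  ext n
  rw [coeff_sub, invert_apply, posPart_apply, posPart_apply]
  rcases lt_trichotomy n 0 with hn | hn | hn
  · rw [if_neg (by omega), if_pos (by omega), hneg n]
    ring
  · subst hn
    simp [h0]
  · rw [if_pos hn, if_neg (by omega), sub_zero]


lemma exists_maximal_wrt' {α β : Type*} [PartialOrder β] (f : α → β) (s : Set α)
    (h : s.Finite) (hs : s.Nonempty) : ∃ a ∈ s, ∀ a' ∈ s, f a ≤ f a' → f a = f a' := by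
  obtain ⟨a, ha, hmax⟩ := h.exists_maximalFor f s hs
  exact ⟨a, ha, fun a' ha' hle => le_antisymm hle (hmax ha' hle)⟩

section Module

variable {X : Type*} [PartialOrder X]
  (d : (X →₀ LaurentPolynomial ℤ) →+ (X →₀ LaurentPolynomial ℤ))
  (hdτ : ∀ a, d ((LaurentPolynomial.T 1 : LaurentPolynomial ℤ) • a)
      = (LaurentPolynomial.T (-1) : LaurentPolynomial ℤ) • d a)

include hdτ

lemma dsmul : ∀ (p : R) (a : X →₀ R), d (p • a) = invert p • d a := by
  have hTneg : ∀ a : X →₀ R, d ((T (-1) : R) • a) = (T 1 : R) • d a := by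
    intro a
    have h1 := hdτ ((T (-1) : R) • a)
    rw [smul_smul, ← T_add] at h1
    norm_num at h1
    have h2 := congrArg (fun z => (T 1 : R) • z) h1
    simp only [smul_smul, ← T_add] at h2
    norm_num at h2
    exact h2.symm
  have hTn : ∀ (n : ℤ) (a : X →₀ R), d ((T n : R) • a) = (T (-n) : R) • d a := by
    intro n
    induction n using Int.induction_on with
    | zero => intro a; norm_num
    | succ k ih =>
      intro a
      have h1 : ((T ((k : ℤ) + 1) : R)) • a = (T 1 : R) • ((T (k : ℤ) : R) • a) := by
        rw [smul_smul, ← T_add, add_comm]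
      rw [h1, hdτ, ih, smul_smul, ← T_add]
      ring_nf
    | pred k ih =>
      intro a
      have h1 : ((T (-(k : ℤ) - 1) : R)) • a = (T (-1) : R) • ((T (-(k:ℤ)) : R) • a) := by
        rw [smul_smul, ← T_add]
        ring_nf
      rw [h1, hTneg, ih, smul_smul, ← T_add]
      ring_nf
  intro p a
  induction p using LaurentPolynomial.induction_on' with
  | add p q hp hq => rw [add_smul, map_add, hp, hq, map_add, add_smul]
  | C_mul_T n c =>
    have hc : (C c : R) = ((c : ℤ) : R) := eq_intCast (C : ℤ →+* R) c
    have h1 : (LaurentPolynomial.C c * T n : R) • a = c • ((T n : R) • a) := by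
      rw [mul_smul, hc, Int.cast_smul_eq_zsmul]
    have h2 : invert ((LaurentPolynomial.C c * T n : R)) = LaurentPolynomial.C c * T (-n) := by
      rw [map_mul]
      simp
    rw [h1, map_zsmul, hTn, h2, mul_smul, hc, Int.cast_smul_eq_zsmul]

lemma dsingle (z : X) (p : R) :
    d (Finsupp.single z p) = invert p • d (Finsupp.single z 1) := by
  rw [← dsmul d hdτ]
  congr 1
  rw [Finsupp.smul_single', mul_one]

lemma coeff_d_max (htri : ∀ x y : X,
      ((d (Finsupp.single x 1) - Finsupp.single x 1 : X →₀ R) y ≠ 0) → y < x)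
    (a : X →₀ R) (y : X) (hmax : ∀ z, a z ≠ 0 → ¬ y < z) :
    (d a) y = invert (a y) := by
  classical
  have hsingle : ∀ z : X, (d (Finsupp.single z (a z))) y
      = invert (a z) * ((d (Finsupp.single z 1) - Finsupp.single z 1 : X →₀ R) y
        + Finsupp.single z (1:R) y) := by
    intro z
    rw [dsingle d hdτ, Finsupp.smul_apply, smul_eq_mul]
    congr 1
    rw [Finsupp.sub_apply]
    ring
  have hd : d a = a.sum fun z p => d (Finsupp.single z p) := by
    conv_lhs => rw [← Finsupp.sum_single a]
    exact map_finsuppSum d _ _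
  rw [hd, Finsupp.sum_apply, Finsupp.sum]
  rw [Finset.sum_eq_single y]
  · rcases eq_or_ne (a y) 0 with h | h
    · simp [h]
    · rw [hsingle y]
      have he : (d (Finsupp.single y 1) - Finsupp.single y 1 : X →₀ R) y = 0 := by
        by_contra hc
        exact lt_irrefl y (htri y y hc)
      rw [he, Finsupp.single_eq_same, zero_add, mul_one]
  · intro z hz hzy
    rw [hsingle z]
    have he : (d (Finsupp.single z 1) - Finsupp.single z 1 : X →₀ R) y = 0 := by
      by_contra hc
      exact hmax z (Finsupp.mem_support_iff.1 hz) (htri z y hc)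
    rw [he, Finsupp.single_eq_of_ne' hzy, zero_add, mul_zero]
  · intro hy
    rw [Finsupp.notMem_support_iff.1 hy]
    simp

end Module

end StmtSix


open StmtSix

/-- abstract Kazhdan–Lusztig lemma: Let A be the free ℤ[τ,τ⁻¹]-module on a
poset X whose lower intervals are finite, and d : A → A a ℤ-linear involution with
d(τa) = τ⁻¹ d(a) and d(b_x) = b_x + Σ_{y<x} r_{y,x} b_y.  Then for each x there is a
unique d-fixed element u_x = b_x + Σ_{y<x} h_{y,x} b_y with all h_{y,x} ∈ τℤ[τ]. -/
theorem stmt_6 (X : Type*) [PartialOrder X]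
    (hfin : ∀ x : X, {y | y ≤ x}.Finite)
    (d : (X →₀ LaurentPolynomial ℤ) →+ (X →₀ LaurentPolynomial ℤ))
    (hdinv : ∀ a, d (d a) = a)
    (hdτ : ∀ a, d ((LaurentPolynomial.T 1 : LaurentPolynomial ℤ) • a) = (LaurentPolynomial.T (-1) : LaurentPolynomial ℤ) • d a)
    (htri : ∀ x y : X, ((d (Finsupp.single x 1) - Finsupp.single x 1 : X →₀ LaurentPolynomial ℤ) y ≠ 0) → y < x) :
    ∀ x : X, ∃! u : X →₀ LaurentPolynomial ℤ,
      d u = u ∧ u x = 1 ∧ (∀ y, u y ≠ 0 → y ≤ x) ∧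
      (∀ y, y < x → ∃ q : Polynomial ℤ, u y = (LaurentPolynomial.T 1 : LaurentPolynomial ℤ) * q.toLaurent) := by
  classical
  have hacc : ∀ x : X, Acc (· < · : X → X → Prop) x := by
    intro x
    have hw := (hfin x).wellFoundedOn (r := (· < · : X → X → Prop))
    have key : ∀ y : X, y ∈ {y : X | y ≤ x} → Acc (· < · : X → X → Prop) y := by
      intro y hy
      refine Set.WellFoundedOn.induction hw hy ?_
      intro z hz ih
      constructor
      intro w hwz
      exact ih w (le_trans hwz.le hz) hwz
    exact key x (le_refl x)
  intro x₀
  refine WellFounded.induction (C := fun x : X => ∃! u : X →₀ LaurentPolynomial ℤ,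
      d u = u ∧ u x = 1 ∧ (∀ y, u y ≠ 0 → y ≤ x) ∧
      (∀ y, y < x → ∃ q : Polynomial ℤ,
        u y = (LaurentPolynomial.T 1 : LaurentPolynomial ℤ) * q.toLaurent))
    ⟨hacc⟩ x₀ ?_
  clear x₀
  intro x IH
  set A := X →₀ LaurentPolynomial ℤ with hA
  let U : X → A := fun y => if h : y < x then (IH y h).choose else 0
  have hU : ∀ y, y < x → (d (U y) = U y ∧ U y y = 1 ∧ (∀ z, U y z ≠ 0 → z ≤ y) ∧
      (∀ z, z < y → ∃ q : Polynomial ℤ, U y z = T 1 * q.toLaurent)) := by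
    intro y h
    simpa only [U, dif_pos h] using (IH y h).choose_spec.1
  have hUd : ∀ y, y < x → d (U y) = U y := fun y h => (hU y h).1
  have hU1 : ∀ y, y < x → U y y = 1 := fun y h => (hU y h).2.1
  have hUsupp : ∀ y, y < x → ∀ z, U y z ≠ 0 → z ≤ y := fun y h => (hU y h).2.2.1
  have hUM : ∀ y, y < x → ∀ z, z < y → Mset (U y z) := by
    intro y h z hz
    obtain ⟨q, hq⟩ := (hU y h).2.2.2 z hz
    rw [hq]
    exact Mset_ofRep q
  set S : Finset X := (hfin x).toFinset.erase x with hS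
  have hmemS : ∀ y, y ∈ S ↔ y < x := by
    intro y
    simp only [hS, Finset.mem_erase, Set.Finite.mem_toFinset, Set.mem_setOf_eq]
    constructor
    · rintro ⟨h1, h2⟩; exact lt_of_le_of_ne h2 h1
    · intro h; exact ⟨ne_of_lt h, le_of_lt h⟩
  -- linear independence
  have li : ∀ f : X → LaurentPolynomial ℤ, (∑ y ∈ S, f y • U y) = 0 → ∀ y ∈ S, f y = 0 := by
    intro f hf
    by_contra hc
    push_neg at hc
    obtain ⟨y0, hy0S, hy0⟩ := hc
    set B := S.filter (fun y => f y ≠ 0) with hB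
    have hBne : (B : Set X).Nonempty := ⟨y0, by simp [hB, hy0S, hy0]⟩
    obtain ⟨m, hmB, hmax⟩ := exists_maximal_wrt' id (B : Set X) B.finite_toSet hBne
    have hm : m ∈ S ∧ f m ≠ 0 := by simpa [hB] using hmB
    have h0 : (∑ y ∈ S, f y • U y) m = (0 : LaurentPolynomial ℤ) := by rw [hf]; rfl
    rw [Finset.sum_apply'] at h0
    rw [Finset.sum_eq_single m ?_ (fun h => absurd hm.1 h)] at h0
    · rw [Finsupp.smul_apply, smul_eq_mul, hU1 m ((hmemS m).1 hm.1), mul_one] at h0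
      exact hm.2 h0
    · intro y hyS hym
      rw [Finsupp.smul_apply, smul_eq_mul]
      rcases eq_or_ne (f y) 0 with h | h
      · rw [h, zero_mul]
      rcases eq_or_ne (U y m) 0 with h2 | h2
      · rw [h2, mul_zero]
      exfalso
      have hmy : m ≤ y := hUsupp y ((hmemS y).1 hyS) m h2
      have : m = y := hmax y (by simp [hB, hyS, h]) hmy
      exact hym this.symm
  -- representation
  let Lf : A → Finset X := fun v => v.support.biUnion (fun z => (hfin z).toFinset)
  have hLf_mem : ∀ (v : A) (w : X), w ∈ Lf v ↔ ∃ z ∈ v.support, w ≤ z := by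
    intro v w
    simp [Lf, Finset.mem_biUnion, Set.Finite.mem_toFinset]
  have hsupp_sub : ∀ v : A, v.support ⊆ Lf v :=
    fun v z hz => (hLf_mem v z).2 ⟨z, hz, le_refl z⟩
  have rep : ∀ (n : ℕ) (v : A), (Lf v).card ≤ n → (∀ z ∈ v.support, z < x) →
      ∃ t : X → LaurentPolynomial ℤ, (∀ y, t y ≠ 0 → y ∈ Lf v) ∧ v = ∑ y ∈ S, t y • U y := by
    intro n
    induction n with
    | zero =>
      intro v hcard _
      have hLe : Lf v = ∅ := Finset.card_eq_zero.mp (Nat.le_zero.mp hcard)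
      have hv : v = 0 := by
        have h1 := hsupp_sub v
        rw [hLe, Finset.subset_empty] at h1
        exact Finsupp.support_eq_empty.mp h1
      exact ⟨0, by simp, by simp [hv]⟩
    | succ n ih =>
      intro v hcard hvx
      rcases eq_or_ne v 0 with rfl | hv
      · exact ⟨0, by simp, by simp⟩
      have hne : (Lf v : Set X).Nonempty := by
        obtain ⟨z, hz⟩ := Finsupp.support_nonempty_iff.2 hv
        exact ⟨z, hsupp_sub v hz⟩
      obtain ⟨y0, hy0L, hmax⟩ := exists_maximal_wrt' id _ (Lf v).finite_toSet hne
      have hy0L' : y0 ∈ Lf v := hy0L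
      have hy0supp : y0 ∈ v.support := by
        obtain ⟨z, hz, hle⟩ := (hLf_mem v y0).1 hy0L'
        have h1 : y0 = z := hmax z (hsupp_sub v hz) hle
        rwa [h1]
      have hy0x : y0 < x := hvx y0 hy0supp
      set v' := v - v y0 • U y0 with hv'
      have hv'app : ∀ w, v' w = v w - v y0 * U y0 w := by
        intro w
        rw [hv', Finsupp.sub_apply, Finsupp.smul_apply, smul_eq_mul]
      have hsub : ∀ w, w ∈ v'.support → w ∈ (Lf v).erase y0 := by
        intro w hw
        have hw0 : v' w ≠ 0 := Finsupp.mem_support_iff.1 hw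
        have hwle : w ∈ Lf v := by
          rcases eq_or_ne (v w) 0 with h | h
          · have h2 : U y0 w ≠ 0 := by
              intro h2
              apply hw0
              rw [hv'app, h, h2, mul_zero, sub_zero]
            exact (hLf_mem v w).2 ⟨y0, hy0supp, hUsupp y0 hy0x w h2⟩
          · exact hsupp_sub v (Finsupp.mem_support_iff.2 h)
        have hwy0 : w ≠ y0 := by
          rintro rfl
          apply hw0
          rw [hv'app, hU1 _ hy0x, mul_one, sub_self]
        exact Finset.mem_erase.2 ⟨hwy0, hwle⟩
      have hLf' : Lf v' ⊆ (Lf v).erase y0 := by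
        intro w hwL
        obtain ⟨z, hz, hle⟩ := (hLf_mem v' w).1 hwL
        have hz' := hsub z hz
        have hzLv : z ∈ Lf v := Finset.mem_of_mem_erase hz'
        obtain ⟨z2, hz2, hle2⟩ := (hLf_mem v z).1 hzLv
        have hwLv : w ∈ Lf v := (hLf_mem v w).2 ⟨z2, hz2, le_trans hle hle2⟩
        refine Finset.mem_erase.2 ⟨?_, hwLv⟩
        rintro rfl
        exact (Finset.mem_erase.1 hz').1 (hmax z hzLv hle).symm
      have hcard' : (Lf v').card ≤ n := by
        have h1 := Finset.card_le_card hLf'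
        rw [Finset.card_erase_of_mem hy0L'] at h1
        omega
      have hv'x : ∀ z ∈ v'.support, z < x := by
        intro z hz
        have h1 : z ∈ Lf v := Finset.mem_of_mem_erase (hsub z hz)
        obtain ⟨z2, hz2, hle⟩ := (hLf_mem v z).1 h1
        exact lt_of_le_of_lt hle (hvx z2 hz2)
      obtain ⟨t', ht'supp, ht'⟩ := ih v' hcard' hv'x
      have ht'y0 : t' y0 = 0 := by
        by_contra h
        exact (Finset.mem_erase.1 (hLf' (ht'supp y0 h))).1 rfl
      refine ⟨fun z => if z = y0 then v y0 else t' z, ?_, ?_⟩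
      · intro z hz
        by_cases h : z = y0
        · rw [h]; exact hy0L'
        · simp only [if_neg h] at hz
          exact Finset.mem_of_mem_erase (hLf' (ht'supp z hz))
      · have hy0S : y0 ∈ S := (hmemS y0).2 hy0x
        rw [← Finset.sum_erase_add _ _ hy0S]
        beta_reduce
        rw [if_pos rfl]
        have hsum1 : ∑ y ∈ S.erase y0, (if y = y0 then v y0 else t' y) • U y
            = ∑ y ∈ S.erase y0, t' y • U y :=
          Finset.sum_congr rfl (fun y hy => by rw [if_neg (Finset.ne_of_mem_erase hy)])
        have hsum2 : ∑ y ∈ S.erase y0, t' y • U y = ∑ y ∈ S, t' y • U y := by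
          refine Finset.sum_subset (Finset.erase_subset _ _) ?_
          intro y hyS hy
          have : y = y0 := by
            by_contra h
            exact hy (Finset.mem_erase.2 ⟨h, hyS⟩)
          rw [this, ht'y0, zero_smul]
        rw [hsum1, hsum2, ← ht', hv']
        abel
  -- existence
  set e : A := d (Finsupp.single x 1) - Finsupp.single x 1 with he
  have hex : ∀ z ∈ e.support, z < x := fun z hz => htri x z (Finsupp.mem_support_iff.1 hz)
  obtain ⟨t, htsupp, hte⟩ := rep (Lf e).card e le_rfl hex
  have hde : d e = -e := by
    rw [he, map_sub, hdinv]
    abel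
  have hanti : ∀ y ∈ S, invert (t y) = - t y := by
    have hdsum : d e = ∑ y ∈ S, invert (t y) • U y := by
      rw [hte, map_sum]
      exact Finset.sum_congr rfl fun y hy => by
        rw [dsmul d hdτ, hUd y ((hmemS y).1 hy)]
    have hsum : ∑ y ∈ S, (invert (t y) + t y) • U y = 0 := by
      have h1 : ∑ y ∈ S, invert (t y) • U y = -e := by rw [← hdsum, hde]
      calc ∑ y ∈ S, (invert (t y) + t y) • U y
          = ∑ y ∈ S, (invert (t y) • U y + t y • U y) := by
            refine Finset.sum_congr rfl fun y _ => ?_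
            rw [add_smul]
        _ = (∑ y ∈ S, invert (t y) • U y) + ∑ y ∈ S, t y • U y := Finset.sum_add_distrib
        _ = -e + e := by rw [h1, ← hte]
        _ = 0 := by abel
    intro y hy
    have := li _ hsum y hy
    linear_combination this
  set hh : X → LaurentPolynomial ℤ := fun y => posPart (t y) with hhh
  have hhsub : ∀ y ∈ S, hh y - invert (hh y) = t y := fun y hy => posPart_sub (hanti y hy)
  have hhM : ∀ y, Mset (hh y) := fun y => Mset_posPart _
  set u : A := Finsupp.single x 1 + ∑ y ∈ S, hh y • U y with hu
  have hUx0 : ∀ y ∈ S, U y x = 0 := by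
    intro y hy
    by_contra h
    exact absurd (hUsupp y ((hmemS y).1 hy) x h) (not_le_of_gt ((hmemS y).1 hy))
  have hux : u x = 1 := by
    rw [hu, Finsupp.add_apply, Finsupp.single_eq_same, Finset.sum_apply']
    rw [Finset.sum_eq_zero, add_zero]
    intro y hy
    rw [Finsupp.smul_apply, smul_eq_mul, hUx0 y hy, mul_zero]
  have husupp : ∀ z, u z ≠ 0 → z ≤ x := by
    intro z hz
    by_contra hzx
    apply hz
    rw [hu, Finsupp.add_apply, Finset.sum_apply']
    rw [Finsupp.single_eq_of_ne' (by rintro rfl; exact hzx le_rfl), Finset.sum_eq_zero, add_zero]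
    intro y hy
    rw [Finsupp.smul_apply, smul_eq_mul]
    rcases eq_or_ne (U y z) 0 with h | h
    · rw [h, mul_zero]
    · exact absurd (le_trans (hUsupp y ((hmemS y).1 hy) z h) (le_of_lt ((hmemS y).1 hy))) hzx
  have huM : ∀ y, y < x → ∃ q : Polynomial ℤ, u y = T 1 * q.toLaurent := by
    intro y hy
    apply rep_ofMem
    rw [hu, Finsupp.add_apply, Finset.sum_apply']
    rw [Finsupp.single_eq_of_ne' (ne_of_gt hy), zero_add]
    apply Finset.sum_induction _ Mset (fun _ _ ha hb => Mset_add ha hb) Mset_zero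
    intro z hz
    rw [Finsupp.smul_apply, smul_eq_mul]
    rcases eq_or_ne (U z y) 0 with h | h
    · rw [h, mul_zero]; exact Mset_zero
    rcases eq_or_ne z y with rfl | hzy
    · rw [hU1 z ((hmemS z).1 hz), mul_one]; exact hhM z
    · have hyz : y < z := lt_of_le_of_ne (hUsupp z ((hmemS z).1 hz) y h) (Ne.symm hzy)
      exact Mset_mul (hhM z) (hUM z ((hmemS z).1 hz) y hyz)
  have hud : d u = u := by
    have h1 : d u = d (Finsupp.single x 1) + ∑ y ∈ S, invert (hh y) • U y := by
      rw [hu, map_add, map_sum]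
      congr 1
      exact Finset.sum_congr rfl fun y hy => by
        rw [dsmul d hdτ, hUd y ((hmemS y).1 hy)]
    have h2 : d (Finsupp.single x 1) = Finsupp.single x 1 + e := by rw [he]; abel
    rw [h1, h2, hte, hu]
    rw [add_assoc, ← Finset.sum_add_distrib]
    congr 1
    refine Finset.sum_congr rfl fun y hy => ?_
    rw [← add_smul]
    congr 1
    have := hhsub y hy
    linear_combination -this
  refine ⟨u, ⟨hud, hux, husupp, huM⟩, ?_⟩
  intro u2 hu2
  by_contra hne
  set w : A := u2 - u with hw
  have hw0 : w ≠ 0 := sub_ne_zero.2 hne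
  have hwd : d w = w := by rw [hw, map_sub, hu2.1, hud]
  have hwx : w x = 0 := by rw [hw, Finsupp.sub_apply, hu2.2.1, hux, sub_self]
  have hwsupp : ∀ z, w z ≠ 0 → z < x := by
    intro z hz
    have hzx : z ≤ x := by
      rcases eq_or_ne (u2 z) 0 with h | h
      · refine husupp z ?_
        intro h2
        apply hz
        rw [hw, Finsupp.sub_apply, h, h2, sub_self]
      · exact hu2.2.2.1 z h
    refine lt_of_le_of_ne hzx ?_
    rintro rfl
    exact hz hwx
  have hwne : (w.support : Set X).Nonempty := by
    obtain ⟨z, hz⟩ := Finsupp.support_nonempty_iff.2 hw0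
    exact ⟨z, hz⟩
  obtain ⟨m, hmW, hmax⟩ := exists_maximal_wrt' id _ w.support.finite_toSet hwne
  have hmW' : m ∈ w.support := hmW
  have hmx : m < x := hwsupp m (Finsupp.mem_support_iff.1 hmW')
  have hfix : (d w) m = invert (w m) := by
    refine coeff_d_max d hdτ htri w m ?_
    intro z hz hlt
    have h1 : m = z := hmax z (Finsupp.mem_support_iff.2 hz) hlt.le
    exact absurd (h1 ▸ hlt) (lt_irrefl m)
  have heq : w m = invert (w m) := by rw [← hfix, hwd]
  have hMm : Mset (w m) := by
    obtain ⟨q2, hq2⟩ := hu2.2.2.2 m hmx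
    obtain ⟨q1, hq1⟩ := huM m hmx
    rw [hw, Finsupp.sub_apply, hq1, hq2]
    exact Mset_sub (Mset_ofRep q2) (Mset_ofRep q1)
  have : w m = 0 := by
    ext n
    rcases le_or_gt n 0 with hn | hn
    · rw [hMm n hn]; rfl
    · have h1 : (w m).coeff n = (w m).coeff (-n) := by
        conv_lhs => rw [heq]
        rw [invert_apply]
      rw [h1, hMm (-n) (by omega)]
      rfl
  exact (Finsupp.mem_support_iff.1 hmW') this
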